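/- Multiplicative decomposition theorem (existence): if a g-valued formal distribution a in two variables is q-local with respect to a finite set T ⊂ ℤ, then there exist one-variable g-valued formal distributions c_k, k ∈ T, such that a = ∑_{k∈T} c_k(w)δ(z/q^k w); explicitly, a_{m,n} = ∑_{k∈T} q^{−km}·(c_k)_{m+n} for all m, n ∈ ℤ. -/

import Mathlib

/-- Multiplication of a `g`-valued formal distribution in two variables by `(z - q^k w)`:
the `(m,n)`-coefficient of the result is `b_{m-1,n} - q^k • b_{m,n-1}`. -/
noncomputable def qMul {F : Type*} [Field F] {g : Type*} [AddCommGroup g] [Module F g]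
    (q : F) (k : ℤ) (b : ℤ → ℤ → g) : ℤ → ℤ → g :=
  fun m n => b (m - 1) n - q ^ k • b m (n - 1)

section aux

variable {F : Type*} [Field F] {g : Type*} [AddCommGroup g] [Module F g]

/-- The single-delta distribution `c(w) δ(z/q^k w)`. -/
noncomputable def edelta (q : F) (k : ℤ) (c : ℤ → g) : ℤ → ℤ → g :=
  fun m n => q ^ (-(k * m)) • c (m + n)

lemma qMul_sub (q : F) (k : ℤ) (b1 b2 : ℤ → ℤ → g) :
    qMul q k (fun m n => b1 m n - b2 m n) =
      fun m n => qMul q k b1 m n - qMul q k b2 m n := by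
  funext m n
  simp only [qMul, smul_sub]
  abel

lemma foldr_sub (q : F) (T : List ℤ) (b1 b2 : ℤ → ℤ → g) :
    T.foldr (qMul q) (fun m n => b1 m n - b2 m n) =
      fun m n => T.foldr (qMul q) b1 m n - T.foldr (qMul q) b2 m n := by
  induction T with
  | nil => rfl
  | cons k T ih => simp only [List.foldr_cons, ih, qMul_sub]

lemma single_delta (q : F) (hq : q ≠ 0) (k : ℤ) (b : ℤ → ℤ → g)
    (h : qMul q k b = 0) : ∀ m n : ℤ, b m n = q ^ (-(k * m)) • b 0 (m + n) := by
  have hrel : ∀ m n : ℤ, b (m - 1) n = q ^ k • b m (n - 1) := by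
    intro m n
    have := congrFun (congrFun h m) n
    simpa [qMul, sub_eq_zero] using this
  have key : ∀ m : ℤ, ∀ n : ℤ, b m n = q ^ (-(k * m)) • b 0 (m + n) := by
    intro m
    induction m using Int.induction_on with
    | zero => intro n; simp
    | succ p ih =>
        intro n
        have h1 : b ((p : ℤ) + 1 - 1) (n + 1) = q ^ k • b ((p : ℤ) + 1) (n + 1 - 1) :=
          hrel ((p : ℤ) + 1) (n + 1)
        have h2 : b (p : ℤ) (n + 1) = q ^ k • b ((p : ℤ) + 1) n := by
          simpa using h1
        have h3 : b ((p : ℤ) + 1) n = q ^ (-k) • b (p : ℤ) (n + 1) := by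
          rw [h2, smul_smul, ← zpow_add₀ hq]
          simp
        rw [h3, ih (n + 1), smul_smul, ← zpow_add₀ hq]
        congr 1
        · ring_nf
        · ring_nf
    | pred p ih =>
        intro n
        have h1 : b (-(p : ℤ) - 1) n = q ^ k • b (-(p : ℤ)) (n - 1) := hrel (-(p : ℤ)) n
        rw [h1, ih (n - 1), smul_smul, ← zpow_add₀ hq]
        congr 1
        · ring_nf
        · ring_nf
  exact key

lemma qMul_edelta (q : F) (hq : q ≠ 0) (k j : ℤ) (c : ℤ → g) :
    qMul q j (edelta q k c) = edelta q k (fun s => (q ^ k - q ^ j) • c (s - 1)) := by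
  funext m n
  simp only [qMul, edelta]
  have h1 : (m - 1) + n = m + n - 1 := by ring
  have h2 : m + (n - 1) = m + n - 1 := by ring
  rw [h1, h2, smul_smul, ← sub_smul, smul_smul]
  congr 1
  rw [show -(k * (m - 1)) = -(k * m) + k by ring, zpow_add₀ hq]
  ring

lemma foldr_edelta (q : F) (hq : q ≠ 0) (k : ℤ) (T : List ℤ) (c : ℤ → g) :
    T.foldr (qMul q) (edelta q k c) =
      edelta q k (fun s => (T.map (fun j => q ^ k - q ^ j)).prod • c (s - T.length)) := by
  induction T generalizing c with
  | nil => simp [edelta]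
  | cons j T ih =>
      rw [List.foldr_cons, ih, qMul_edelta q hq]
      funext m n
      simp only [edelta, List.map_cons, List.prod_cons, List.length_cons, smul_smul]
      have harg : m + n - 1 - (T.length : ℤ) = m + n - ((T.length : ℤ) + 1) := by ring
      rw [harg]
      push_cast
      rfl

end aux

/-- multiplicative decomposition theorem (existence).  If a `g`-valued formal
distribution `a` in two variables is `q`-local with respect to a finite set `T ⊂ ℤ`
(here represented by a duplicate-free list: applying successively the multiplications by
`(z - q^k w)` for all `k ∈ T` yields `0`), then there are one-variable distributions `c_k`,
`k ∈ T`, with `a = ∑_{k∈T} c_k(w) δ(z/q^k w)`, i.e.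
`a_{m,n} = ∑_{k∈T} q^{-km} • (c_k)_{m+n}` for all `m, n ∈ ℤ`. -/
theorem stmt_2 (F : Type*) [Field F] [CharZero F] (q : F) (hq : q ≠ 0)
    (hqroot : ∀ n : ℤ, n ≠ 0 → q ^ n ≠ 1)
    (g : Type*) [AddCommGroup g] [Module F g]
    (a : ℤ → ℤ → g) (T : List ℤ) (hT : T.Nodup)
    (hlocal : T.foldr (qMul q) a = 0) :
    ∃ c : ℤ → ℤ → g, ∀ m n : ℤ,
      a m n = ∑ k ∈ T.toFinset, q ^ (-(k * m)) • c k (m + n) := by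
  induction T generalizing a with
  | nil =>
      refine ⟨0, fun m n => ?_⟩
      have : a = 0 := hlocal
      simp [this]
  | cons k T ih =>
      rw [List.nodup_cons] at hT
      obtain ⟨hk, hT'⟩ := hT
      set b : ℤ → ℤ → g := T.foldr (qMul q) a with hb
      have hqb : qMul q k b = 0 := hlocal
      have hbval : ∀ m n : ℤ, b m n = q ^ (-(k * m)) • b 0 (m + n) :=
        single_delta q hq k b hqb
      set lam : F := (T.map (fun j => q ^ k - q ^ j)).prod with hlam
      have hlam0 : lam ≠ 0 := by
        rw [hlam]
        apply List.prod_ne_zero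
        intro h0
        rw [List.mem_map] at h0
        obtain ⟨j, hj, hzero⟩ := h0
        have hkj : q ^ k = q ^ j := by
          rwa [sub_eq_zero] at hzero
        have : q ^ (k - j) = 1 := by
          rw [zpow_sub₀ hq, hkj, div_self (zpow_ne_zero _ hq)]
        exact hqroot (k - j) (sub_ne_zero.mpr (fun h => hk (h ▸ hj))) this
      set ck : ℤ → g := fun s => lam⁻¹ • b 0 (s + T.length) with hck
      have hfold : T.foldr (qMul q) (edelta q k ck) = b := by
        rw [foldr_edelta q hq]
        funext m n
        rw [hbval m n]
        simp only [edelta, hck]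
        congr 1
        rw [smul_smul, mul_inv_cancel₀ hlam0, one_smul]
        congr 1
        ring
      have hdiff : T.foldr (qMul q) (fun m n => a m n - edelta q k ck m n) = 0 := by
        rw [foldr_sub]
        funext m n
        rw [← hb, hfold]
        simp
      obtain ⟨c', hc'⟩ := ih (fun m n => a m n - edelta q k ck m n) hT' hdiff
      refine ⟨fun j => if j = k then ck else c' j, fun m n => ?_⟩
      have hkT : k ∉ T.toFinset := by simpa using hk
      rw [List.toFinset_cons, Finset.sum_insert hkT]
      have h1 := hc' m n
      have h2 : a m n = edelta q k ck m n + (a m n - edelta q k ck m n) := by abel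
      rw [h2, h1]
      congr 1
      · simp [edelta]
      · apply Finset.sum_congr rfl
        intro j hj
        have : j ≠ k := fun h => hkT (h ▸ hj)
        simp [this]
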